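/- Define f : B² → ℂ² by f(z₁,z₂) = (z₁, ¼·z₂·(1−z₁)²). Then: (i) f(B²) ⊆ B²; (ii) f is injective on B²; (iii) e₁ is a boundary regular fixed point of f; (iv) for every M > 1 and every δ > 0, the set C(M) ∩ B(e₁,δ) is not contained in f(B²). In particular the image of f does not eventually contain any cone with vertex at e₁. -/

import Mathlib

open Metric Filter Set Topology

/-- Inverse hyperbolic tangent. -/
noncomputable def arctanh (x : ℝ) : ℝ := (1/2) * Real.log ((1 + x) / (1 - x))

/-- The point `e₁ = (1,0,…,0)` of `ℂ^(n+1)`. -/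
noncomputable def e1 (n : ℕ) : EuclideanSpace ℂ (Fin (n+1)) := EuclideanSpace.single 0 1

/-- The Kobayashi distance of the unit ball `B^(n+1)`: `k(a,b) = arctanh σ(a,b)`. -/
noncomputable def kB {n : ℕ} (a b : EuclideanSpace ℂ (Fin (n+1))) : ℝ :=
  arctanh (Real.sqrt (1 - (1 - ‖a‖^2) * (1 - ‖b‖^2) / ‖1 - (inner ℂ a b : ℂ)‖^2))

/-- The projection `π(z) = ⟨z,e₁⟩e₁` (where `⟨z,w⟩ = Σ z_j conj(w_j)`). -/
noncomputable def projE1 {n : ℕ} (z : EuclideanSpace ℂ (Fin (n+1))) : EuclideanSpace ℂ (Fin (n+1)) :=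
  (inner ℂ (e1 n) z : ℂ) • e1 n

/-- The Stolz region `K(M,s)`. -/
def StolzK (M s : ℝ) : Set ℂ :=
  {ζ | ‖ζ‖ < 1 ∧ ‖1 - ζ‖ < M * (1 - ‖ζ‖) ∧ ‖1 - ζ‖ < s}

/-- The cone `C(M)` of vertex `e₁` and amplitude `M`. -/
def coneB (n : ℕ) (M : ℝ) : Set (EuclideanSpace ℂ (Fin (n+1))) :=
  {z | ‖z‖ < 1 ∧ ‖e1 n - z‖ < M * (1 - ‖z‖)}

/-- `e₁` is a boundary regular fixed point of `f`. -/
def IsBRFP {n : ℕ} (f : EuclideanSpace ℂ (Fin (n+1)) → EuclideanSpace ℂ (Fin (n+1))) : Prop :=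
  Filter.liminf (fun z => ENNReal.ofReal ((1 - ‖f z‖) / (1 - ‖z‖))) (𝓝[Metric.ball 0 1] (e1 n)) < ⊤ ∧
  Filter.Tendsto (fun r : ℝ => f ((r : ℂ) • e1 n)) (𝓝[Set.Ioo (0:ℝ) 1] 1) (𝓝 (e1 n))

/-- The determinant of the complex differential of `f` at `z`. -/
noncomputable def jacDet {n : ℕ} (f : EuclideanSpace ℂ (Fin (n+1)) → EuclideanSpace ℂ (Fin (n+1)))
    (z : EuclideanSpace ℂ (Fin (n+1))) : ℂ :=
  LinearMap.det (fderiv ℂ f z).toLinearMap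

/-- `e₁` is a boundary super-regular fixed point of `f`. -/
def IsBSRFP {n : ℕ} (f : EuclideanSpace ℂ (Fin (n+1)) → EuclideanSpace ℂ (Fin (n+1))) : Prop :=
  IsBRFP f ∧ ∀ M > 1, ∃ c > 0, ∀ ζ : ℕ → ℂ, (∀ k, ζ k ∈ StolzK M 2) →
    Filter.Tendsto ζ atTop (𝓝 1) →
    ENNReal.ofReal c ≤
      Filter.liminf (fun k => ENNReal.ofReal (‖jacDet f ((ζ k) • e1 n)‖)) atTop

/-- `A ⊆ B^(n+1)` is admissible at `e₁`. -/
def AdmissibleB {n : ℕ} (A : Set (EuclideanSpace ℂ (Fin (n+1)))) : Prop :=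
  A ⊆ Metric.ball 0 1 ∧ e1 n ∈ closure A ∧
  ∀ ε > 0, ∃ δ > 0, ∃ M > 1, ∀ z ∈ A ∩ Metric.ball (e1 n) δ,
    projE1 z ∈ coneB n M ∧ kB z (projE1 z) < ε

private lemma ueNormSq (z : EuclideanSpace ℂ (Fin 2)) : ‖z‖^2 = ‖z 0‖^2 + ‖z 1‖^2 := by
  rw [EuclideanSpace.norm_eq, Real.sq_sqrt (by positivity)]
  simp [Fin.sum_univ_two]

private lemma ueCoordLe (z : EuclideanSpace ℂ (Fin 2)) (i : Fin 2) : ‖z i‖ ≤ ‖z‖ := by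
  have h1 : ‖z i‖^2 ≤ ‖z‖^2 := by
    rw [ueNormSq]
    fin_cases i
    · exact le_add_of_nonneg_right (by positivity)
    · exact le_add_of_nonneg_left (by positivity)
  exact (pow_le_pow_iff_left₀ (norm_nonneg _) (norm_nonneg _) two_ne_zero).mp h1

private lemma ueNormLe (z : EuclideanSpace ℂ (Fin 2)) (a b : ℝ) (ha : 0 ≤ a) (hb : 0 ≤ b)
    (h0 : ‖z 0‖ ≤ a) (h1 : ‖z 1‖ ≤ b) : ‖z‖ ≤ a + b := by
  have h2 : ‖z‖^2 ≤ (a+b)^2 := by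
    rw [ueNormSq]; nlinarith [norm_nonneg (z 0), norm_nonneg (z 1)]
  exact (pow_le_pow_iff_left₀ (norm_nonneg _) (by positivity) two_ne_zero).mp h2

/-- **Example (a univalent map whose range contains no cone at `e₁`).**
The map `f(z₁,z₂) = (z₁, ¼·z₂·(1−z₁)²)` maps `B²` into `B²`, is injective on `B²`, has `e₁`
as a boundary regular fixed point, but its image does not eventually contain any cone with
vertex at `e₁`. -/
theorem univalent_example_range_contains_no_cone
    (f : EuclideanSpace ℂ (Fin 2) → EuclideanSpace ℂ (Fin 2))
    (hf0 : ∀ z : EuclideanSpace ℂ (Fin 2), f z 0 = z 0)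
    (hf1 : ∀ z : EuclideanSpace ℂ (Fin 2), f z 1 = (1/4 : ℂ) * z 1 * (1 - z 0)^2) :
    Set.MapsTo f (Metric.ball 0 1) (Metric.ball 0 1) ∧
    Set.InjOn f (Metric.ball 0 1) ∧
    IsBRFP f ∧
    ∀ M > 1, ∀ δ > 0,
      ¬ (coneB 1 M ∩ Metric.ball (e1 1) δ ⊆ f '' Metric.ball 0 1) := by
  have hnorm : ∀ z : EuclideanSpace ℂ (Fin 2), ‖z‖ < 1 → ‖f z‖ ≤ ‖z‖ := by
    intro z hz
    have h0 : ‖z 0‖ ≤ ‖z‖ := ueCoordLe z 0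
    have hz0 : ‖z 0‖ < 1 := lt_of_le_of_lt h0 hz
    have h1 : ‖f z 1‖ ≤ ‖z 1‖ := by
      rw [hf1]
      have hsub : ‖(1 : ℂ) - z 0‖ ≤ 2 := by
        calc ‖(1:ℂ) - z 0‖ ≤ ‖(1:ℂ)‖ + ‖z 0‖ := norm_sub_le _ _
          _ ≤ 2 := by rw [norm_one]; linarith
      calc ‖(1/4:ℂ) * z 1 * (1 - z 0)^2‖ = (1/4) * ‖z 1‖ * ‖(1:ℂ) - z 0‖^2 := by
            rw [norm_mul, norm_mul, norm_pow]; norm_num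
        _ ≤ (1/4) * ‖z 1‖ * 2^2 := by
            gcongr
        _ = ‖z 1‖ := by ring
    have hsq : ‖f z‖^2 ≤ ‖z‖^2 := by
      rw [ueNormSq, ueNormSq]
      have hf0' : ‖f z 0‖ = ‖z 0‖ := by rw [hf0]
      rw [hf0']
      nlinarith [norm_nonneg (f z 1), norm_nonneg (z 1)]
    exact (pow_le_pow_iff_left₀ (norm_nonneg _) (norm_nonneg _) two_ne_zero).mp hsq
  have hball : ∀ z : EuclideanSpace ℂ (Fin 2),
      z ∈ Metric.ball (0 : EuclideanSpace ℂ (Fin 2)) 1 ↔ ‖z‖ < 1 := by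
    intro z; rw [mem_ball_zero_iff]
  have hradial : ∀ r : ℝ, f ((r:ℂ) • e1 1) = (r:ℂ) • e1 1 := by
    intro r
    have hcoord1 : ((r:ℂ) • e1 1) 1 = 0 := by simp [e1, EuclideanSpace.single_apply]
    ext i
    fin_cases i
    · exact hf0 _
    · show f ((r:ℂ) • e1 1) 1 = ((r:ℂ) • e1 1) 1
      rw [hf1, hcoord1, mul_zero, zero_mul]
  have hnorme1 : ∀ r : ℝ, ‖(r:ℂ) • e1 1‖ = |r| := by
    intro r; rw [norm_smul]; simp [e1, EuclideanSpace.norm_single]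
  have hg : Filter.Tendsto (fun r:ℝ => (r:ℂ) • e1 1) (𝓝[Set.Ioo (0:ℝ) 1] 1) (𝓝 (e1 1)) := by
    have h : Filter.Tendsto (fun r:ℝ => (r:ℂ) • e1 1) (𝓝 1) (𝓝 ((1:ℂ) • e1 1)) :=
      (Complex.continuous_ofReal.tendsto 1).smul tendsto_const_nhds
    rw [one_smul] at h
    exact h.mono_left nhdsWithin_le_nhds
  refine ⟨?_, ?_, ⟨?_, ?_⟩, ?_⟩
  · -- MapsTo
    intro z hz
    rw [hball] at hz ⊢
    exact lt_of_le_of_lt (hnorm z hz) hz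
  · -- InjOn
    intro z hz w hw hfe
    rw [hball] at hz hw
    have h0 : z 0 = w 0 := by rw [← hf0 z, ← hf0 w, hfe]
    have hz0ne : ((1 : ℂ) - z 0)^2 ≠ 0 := by
      apply pow_ne_zero
      intro h
      have hz01 : z 0 = 1 := by linear_combination -h
      have hle := ueCoordLe z 0
      rw [hz01, norm_one] at hle
      linarith
    have h1 : z 1 = w 1 := by
      have he : (1/4 : ℂ) * z 1 * (1 - z 0)^2 = (1/4 : ℂ) * w 1 * (1 - z 0)^2 := by
        rw [← hf1 z, hfe, hf1 w, h0]
      have := mul_right_cancel₀ hz0ne he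
      field_simp at this
      exact this
    ext i
    fin_cases i
    · exact h0
    · exact h1
  · -- liminf < ⊤
    have hg' : Filter.Tendsto (fun r:ℝ => (r:ℂ) • e1 1) (𝓝[Set.Ioo (0:ℝ) 1] 1)
        (𝓝[Metric.ball (0 : EuclideanSpace ℂ (Fin 2)) 1] (e1 1)) := by
      apply tendsto_nhdsWithin_of_tendsto_nhds_of_eventually_within _ hg
      filter_upwards [self_mem_nhdsWithin] with r hr
      rw [hball, hnorme1, abs_of_pos hr.1]
      exact hr.2
    have hne : (𝓝[Set.Ioo (0:ℝ) 1] (1:ℝ)).NeBot := right_nhdsWithin_Ioo_neBot one_pos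
    have hfreq : ∃ᶠ z in 𝓝[Metric.ball (0 : EuclideanSpace ℂ (Fin 2)) 1] (e1 1),
        ENNReal.ofReal ((1 - ‖f z‖)/(1 - ‖z‖)) ≤ 1 := by
      apply hg'.frequently
      apply Filter.Eventually.frequently
      filter_upwards [self_mem_nhdsWithin] with r hr
      rw [hradial r, hnorme1, abs_of_pos hr.1]
      rw [div_self (by linarith [hr.2] : (1:ℝ) - r ≠ 0)]
      simp
    exact lt_of_le_of_lt (Filter.liminf_le_of_frequently_le' hfreq) ENNReal.one_lt_top
  · -- tendsto
    apply hg.congr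
    intro r
    exact (hradial r).symm
  · -- no cone
    intro M hM δ hδ hsub
    set ε : ℝ := min (δ/2) (min (1/2) ((M-1)/(M+1))) with hεdef
    have hMpos : (0:ℝ) < (M-1)/(M+1) := by
      apply div_pos <;> linarith
    have hε0 : 0 < ε := lt_min (by linarith) (lt_min (by norm_num) hMpos)
    have hεδ : ε ≤ δ/2 := min_le_left _ _
    have hεhalf : ε ≤ 1/2 := le_trans (min_le_right _ _) (min_le_left _ _)
    have hεM' : ε ≤ (M-1)/(M+1) :=
      le_trans (min_le_right (δ/2) _) (min_le_right (1/2) ((M-1)/(M+1)))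
    have hεM : ε * (M+1) ≤ M - 1 :=
      (le_div_iff₀ (by linarith : (0:ℝ) < M+1)).mp hεM'
    set w : EuclideanSpace ℂ (Fin 2) :=
      ((1-ε : ℝ):ℂ) • e1 1 + ((ε^2/4 : ℝ):ℂ) • EuclideanSpace.single 1 1 with hwdef
    have hw0 : w 0 = ((1-ε:ℝ):ℂ) := by
      simp [hwdef, e1, EuclideanSpace.single_apply]
    have hw1 : w 1 = ((ε^2/4:ℝ):ℂ) := by
      simp [hwdef, e1, EuclideanSpace.single_apply]
    have hw0n : ‖w 0‖ = 1 - ε := by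
      rw [hw0, Complex.norm_real, Real.norm_of_nonneg (by linarith)]
    have hw1n : ‖w 1‖ = ε^2/4 := by
      rw [hw1, Complex.norm_real, Real.norm_of_nonneg (by positivity)]
    have hwle : ‖w‖ ≤ (1-ε) + ε^2/4 :=
      ueNormLe w _ _ (by linarith) (by positivity) (le_of_eq hw0n) (le_of_eq hw1n)
    have hewle : ‖e1 1 - w‖ ≤ ε + ε^2/4 := by
      apply ueNormLe _ _ _ (le_of_lt hε0) (by positivity)
      · have h : (e1 1 - w) 0 = ((ε:ℝ) : ℂ) := by
          have he : (e1 1) 0 = 1 := by simp [e1, EuclideanSpace.single_apply]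
          rw [PiLp.sub_apply, he, hw0]
          push_cast
          ring
        rw [h, Complex.norm_real, Real.norm_of_nonneg hε0.le]
      · have h : (e1 1 - w) 1 = -((ε^2/4 : ℝ):ℂ) := by
          have he : (e1 1) 1 = 0 := by simp [e1, EuclideanSpace.single_apply]
          rw [PiLp.sub_apply, he, hw1]
          ring
        rw [h, norm_neg, Complex.norm_real, Real.norm_of_nonneg (by positivity)]
    have hwlt : ‖w‖ < 1 := lt_of_le_of_lt hwle (by nlinarith)
    have hcone : w ∈ coneB 1 M := by
      refine ⟨hwlt, ?_⟩
      have h1 : M * (1 - ‖w‖) ≥ M * (ε - ε^2/4) := by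
        have : 1 - ‖w‖ ≥ ε - ε^2/4 := by linarith
        nlinarith
      have h2 : ε + ε^2/4 < M * (ε - ε^2/4) := by nlinarith
      linarith [hewle]
    have hmem : w ∈ Metric.ball (e1 1) δ := by
      rw [mem_ball, dist_eq_norm, ← norm_neg, neg_sub]
      have : ε + ε^2/4 < δ := by nlinarith
      linarith [hewle]
    obtain ⟨z, hz, hfz⟩ := hsub ⟨hcone, hmem⟩
    rw [hball] at hz
    have hz1eq : (1/4:ℂ) * z 1 * (1 - z 0)^2 = ((ε^2/4:ℝ):ℂ) := by
      rw [← hf1 z, hfz, hw1]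
    have hz0w : z 0 = ((1-ε:ℝ):ℂ) := by rw [← hf0 z, hfz, hw0]
    rw [hz0w] at hz1eq
    have hcast : (1:ℂ) - ((1-ε:ℝ):ℂ) = (ε:ℂ) := by push_cast; ring
    rw [hcast] at hz1eq
    have hεc : (ε:ℂ) ≠ 0 := by exact_mod_cast hε0.ne'
    have hz1 : z 1 = 1 := by
      have h2 : z 1 * (ε:ℂ)^2 = 1 * (ε:ℂ)^2 := by
        push_cast at hz1eq
        linear_combination 4 * hz1eq
      simpa using mul_right_cancel₀ (pow_ne_zero 2 hεc) h2
    have := ueCoordLe z 1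
    rw [hz1, norm_one] at this
    linarith
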